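/- (Reduction to bipartite graphs via Plücker relations.) Let n = 2m, let A ⊔ B be a partition of {1,…,n} with |A| = |B| = m, and let Γ be a directed graph on {1,…,n} of multidegree (d,…,d). Then there exist finitely many directed graphs Γ_1,…,Γ_r on {1,…,n}, each of multidegree (d,…,d) and each of whose edges has one endpoint in A and one endpoint in B, and signs ε_1,…,ε_r ∈ {1,−1}, such that X_Γ = Σ_i ε_i X_{Γ_i}. Moreover each edge of Γ having one endpoint in A and one in B occurs (with its multiplicity) in every Γ_i. -/
import Mathlib


open MvPolynomial

/-- A directed multigraph on the vertex set `Fin n`: a multiset of ordered pairs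
(multiple edges allowed). -/
abbrev DGraph (n : ℕ) := Multiset (Fin n × Fin n)

/-- `Γ` has no loops. -/
def DGraph.loopless {n : ℕ} (Γ : DGraph n) : Prop := ∀ e ∈ Γ, e.1 ≠ e.2

/-- The multidegree (valence) of `Γ` at the vertex `v`: the number of edges of `Γ`
incident to `v`, counted with multiplicity. -/
def DGraph.mdeg {n : ℕ} (Γ : DGraph n) (v : Fin n) : ℕ :=
  Multiset.countP (fun e => e.1 = v) Γ + Multiset.countP (fun e => e.2 = v) Γ

/-- A perfect matching on `{1,…,n}`: a directed graph of multidegree `(1,…,1)`.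
(Multidegree one everywhere forces looplessness.) -/
def DGraph.isPM {n : ℕ} (Γ : DGraph n) : Prop := ∀ v, Γ.mdeg v = 1

/-- The invariant `X_Γ = ∏_{(i,j) ∈ Γ} (u_j v_i - u_i v_j)`, where the variable
`Sum.inl i` plays the role of `u_i` and `Sum.inr i` plays the role of `v_i`. -/
noncomputable def XG {n : ℕ} (Γ : DGraph n) : MvPolynomial (Fin n ⊕ Fin n) ℤ :=
  (Γ.map (fun e => X (Sum.inl e.2) * X (Sum.inr e.1) - X (Sum.inl e.1) * X (Sum.inr e.2))).prod

lemma sum_mdeg {n : ℕ} (Γ : DGraph n) (A : Finset (Fin n)) :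
    ∑ v ∈ A, Γ.mdeg v =
      2 * Multiset.countP (fun e => e.1 ∈ A ∧ e.2 ∈ A) Γ +
      Multiset.countP (fun e => (e.1 ∈ A ∧ e.2 ∉ A) ∨ (e.2 ∈ A ∧ e.1 ∉ A)) Γ := by
  induction Γ using Multiset.induction_on with
  | empty => simp [DGraph.mdeg]
  | cons e Γ ih =>
    simp only [DGraph.mdeg, Multiset.countP_cons, Finset.sum_add_distrib] at *
    by_cases h1 : e.1 ∈ A <;> by_cases h2 : e.2 ∈ A <;>
      simp [Finset.sum_ite_eq, h1, h2] <;> omega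

lemma counts_eq {m d : ℕ} (A : Finset (Fin (2 * m))) (hA : A.card = m)
    (Γ : DGraph (2 * m)) (hdeg : ∀ v, Γ.mdeg v = d) :
    Multiset.countP (fun e => e.1 ∈ A ∧ e.2 ∈ A) Γ =
      Multiset.countP (fun e => e.1 ∉ A ∧ e.2 ∉ A) Γ := by
  have h1 := sum_mdeg Γ A
  have h2 := sum_mdeg Γ Aᶜ
  have hcard : Aᶜ.card = m := by
    rw [Finset.card_compl, hA]
    simp; omega
  rw [Finset.sum_congr rfl (fun v _ => hdeg v), Finset.sum_const, hA] at h1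
  rw [Finset.sum_congr rfl (fun v _ => hdeg v), Finset.sum_const, hcard] at h2
  have e1 : Multiset.countP (fun e => e.1 ∈ Aᶜ ∧ e.2 ∈ Aᶜ) Γ =
      Multiset.countP (fun e => e.1 ∉ A ∧ e.2 ∉ A) Γ :=
    Multiset.countP_congr rfl (fun e _ => by simp)
  have e2 : Multiset.countP (fun e => (e.1 ∈ Aᶜ ∧ e.2 ∉ Aᶜ) ∨ (e.2 ∈ Aᶜ ∧ e.1 ∉ Aᶜ)) Γ =
      Multiset.countP (fun e => (e.1 ∈ A ∧ e.2 ∉ A) ∨ (e.2 ∈ A ∧ e.1 ∉ A)) Γ :=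
    Multiset.countP_congr rfl (fun e _ => by simp; tauto)
  rw [e1, e2] at h2
  omega

lemma XG_cons {n : ℕ} (e : Fin n × Fin n) (Γ : DGraph n) :
    XG (e ::ₘ Γ) =
      (X (Sum.inl e.2) * X (Sum.inr e.1) - X (Sum.inl e.1) * X (Sum.inr e.2)) * XG Γ := by
  simp [XG]

lemma mdeg_cons {n : ℕ} (e : Fin n × Fin n) (Γ : DGraph n) (v : Fin n) :
    DGraph.mdeg (e ::ₘ Γ) v = DGraph.mdeg Γ v + ((if e.1 = v then 1 else 0) + (if e.2 = v then 1 else 0)) := by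
  simp [DGraph.mdeg, Multiset.countP_cons]; omega

lemma aux (m d : ℕ) (A : Finset (Fin (2 * m))) (hA : A.card = m) :
    ∀ N (Γ : DGraph (2 * m)),
      Multiset.countP (fun e => e.1 ∈ A ∧ e.2 ∈ A) Γ = N →
      Γ.loopless → (∀ v, Γ.mdeg v = d) →
    ∃ (r : ℕ) (Γs : Fin r → DGraph (2 * m)) (ε : Fin r → ℤ),
      (∀ i, (Γs i).loopless ∧ (∀ v, (Γs i).mdeg v = d) ∧
        ∀ e ∈ Γs i, (e.1 ∈ A ∧ e.2 ∉ A) ∨ (e.2 ∈ A ∧ e.1 ∉ A)) ∧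
      (∀ i, ε i = 1 ∨ ε i = -1) ∧
      XG Γ = ∑ i, ε i • XG (Γs i) ∧
      ∀ i, Γ.filter (fun e => (e.1 ∈ A ∧ e.2 ∉ A) ∨ (e.2 ∈ A ∧ e.1 ∉ A)) ≤ Γs i := by
  intro N
  induction N using Nat.strong_induction_on with
  | _ N ih =>
  intro Γ hN hl hdeg
  rcases Nat.eq_zero_or_pos N with h0 | hpos
  · -- all edges cross
    subst h0
    have hb : Multiset.countP (fun e => e.1 ∉ A ∧ e.2 ∉ A) Γ = 0 := by
      rw [← counts_eq A hA Γ hdeg, hN]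
    rw [Multiset.countP_eq_zero] at hN hb
    refine ⟨1, fun _ => Γ, fun _ => 1, fun i => ⟨hl, hdeg, fun e he => ?_⟩,
      fun i => Or.inl rfl, by simp, fun i => Multiset.filter_le _ _⟩
    have h1 := hN e he
    have h2 := hb e he
    by_cases h : e.1 ∈ A <;> tauto
  · -- find a bad edge in A and one outside
    have he1 : ∃ e ∈ Γ, e.1 ∈ A ∧ e.2 ∈ A := Multiset.countP_pos.mp (by omega)
    obtain ⟨e1, he1Γ, hi, hj⟩ := he1
    have hbN : Multiset.countP (fun e => e.1 ∉ A ∧ e.2 ∉ A) Γ = N :=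
      (counts_eq A hA Γ hdeg).symm.trans hN
    have he2 : ∃ e ∈ Γ, e.1 ∉ A ∧ e.2 ∉ A := Multiset.countP_pos.mp (by omega)
    obtain ⟨e2, he2Γ, hk, hlk⟩ := he2
    have hne : e2 ≠ e1 := fun h => hk (h ▸ hi)
    have he2' : e2 ∈ Γ.erase e1 := (Multiset.mem_erase_of_ne hne).mpr he2Γ
    set Γ0 : DGraph (2 * m) := (Γ.erase e1).erase e2 with hΓ0
    have hsplit : Γ = e1 ::ₘ e2 ::ₘ Γ0 := by
      rw [hΓ0, Multiset.cons_erase he2', Multiset.cons_erase he1Γ]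
    obtain ⟨i, j⟩ := e1
    obtain ⟨k, l⟩ := e2
    simp only at hi hj hk hlk
    have hΓ0le : Γ0 ≤ Γ := le_trans (Multiset.erase_le _ _) (Multiset.erase_le _ _)
    -- the two replacement graphs
    set ΓP : DGraph (2 * m) := (i, k) ::ₘ (j, l) ::ₘ Γ0 with hΓP
    set ΓM : DGraph (2 * m) := (i, l) ::ₘ (j, k) ::ₘ Γ0 with hΓM
    have hcount0 : Multiset.countP (fun e => e.1 ∈ A ∧ e.2 ∈ A) Γ0 = N - 1 := by
      rw [hsplit] at hN
      simp only [Multiset.countP_cons] at hN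
      simp only [hi, hj, hk, hlk] at hN
      simp at hN; omega
    have hcountP : Multiset.countP (fun e => e.1 ∈ A ∧ e.2 ∈ A) ΓP = N - 1 := by
      rw [hΓP]; simp only [Multiset.countP_cons]; simp [hk, hlk, hcount0]
    have hcountM : Multiset.countP (fun e => e.1 ∈ A ∧ e.2 ∈ A) ΓM = N - 1 := by
      rw [hΓM]; simp only [Multiset.countP_cons]; simp [hk, hlk, hcount0]
    have hl0 : Γ0.loopless := fun e he => hl e (Multiset.subset_of_le hΓ0le he)
    have hlP : ΓP.loopless := by
      intro e he
      rw [hΓP, Multiset.mem_cons, Multiset.mem_cons] at he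
      rcases he with h | h | h
      · subst h; intro h; simp only at h; exact hk (h ▸ hi)
      · subst h; intro h; simp only at h; exact hlk (h ▸ hj)
      · exact hl0 e h
    have hlM : ΓM.loopless := by
      intro e he
      rw [hΓM, Multiset.mem_cons, Multiset.mem_cons] at he
      rcases he with h | h | h
      · subst h; intro h; simp only at h; exact hlk (h ▸ hi)
      · subst h; intro h; simp only at h; exact hk (h ▸ hj)
      · exact hl0 e h
    have hdegP : ∀ v, ΓP.mdeg v = d := by
      intro v
      have h := hdeg v
      rw [hsplit] at h
      rw [hΓP]
      simp only [mdeg_cons] at h ⊢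
      omega
    have hdegM : ∀ v, ΓM.mdeg v = d := by
      intro v
      have h := hdeg v
      rw [hsplit] at h
      rw [hΓM]
      simp only [mdeg_cons] at h ⊢
      omega
    obtain ⟨r1, Γs1, ε1, hc1, hε1, hX1, hf1⟩ := ih (N - 1) (by omega) ΓP hcountP hlP hdegP
    obtain ⟨r2, Γs2, ε2, hc2, hε2, hX2, hf2⟩ := ih (N - 1) (by omega) ΓM hcountM hlM hdegM
    refine ⟨r1 + r2, Fin.append Γs1 Γs2, Fin.append ε1 (fun i => -ε2 i), ?_, ?_, ?_, ?_⟩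
    · intro i
      refine Fin.addCases (fun i => ?_) (fun i => ?_) i
      · rw [Fin.append_left]; exact hc1 i
      · rw [Fin.append_right]; exact hc2 i
    · intro i
      refine Fin.addCases (fun i => ?_) (fun i => ?_) i
      · rw [Fin.append_left]; exact hε1 i
      · rw [Fin.append_right]; rcases hε2 i with h | h <;> rw [h] <;> simp
    · have hkey : XG Γ = XG ΓP - XG ΓM := by
        rw [hsplit, hΓP, hΓM]
        simp only [XG_cons]
        ring
      rw [hkey, hX1, hX2, Fin.sum_univ_add]
      simp only [Fin.append_left, Fin.append_right, neg_smul]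
      rw [Finset.sum_neg_distrib]
      ring
    · intro i
      have hfΓ : Γ.filter (fun e => (e.1 ∈ A ∧ e.2 ∉ A) ∨ (e.2 ∈ A ∧ e.1 ∉ A)) ≤
          ΓP.filter (fun e => (e.1 ∈ A ∧ e.2 ∉ A) ∨ (e.2 ∈ A ∧ e.1 ∉ A)) := by
        rw [hsplit]
        rw [Multiset.filter_cons_of_neg _ (by simp; tauto),
          Multiset.filter_cons_of_neg _ (by simp; tauto)]
        exact Multiset.filter_le_filter _ (le_trans (Multiset.le_cons_self _ _)
          (Multiset.le_cons_self _ _))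
      have hfΓM : Γ.filter (fun e => (e.1 ∈ A ∧ e.2 ∉ A) ∨ (e.2 ∈ A ∧ e.1 ∉ A)) ≤
          ΓM.filter (fun e => (e.1 ∈ A ∧ e.2 ∉ A) ∨ (e.2 ∈ A ∧ e.1 ∉ A)) := by
        rw [hsplit]
        rw [Multiset.filter_cons_of_neg _ (by simp; tauto),
          Multiset.filter_cons_of_neg _ (by simp; tauto)]
        exact Multiset.filter_le_filter _ (le_trans (Multiset.le_cons_self _ _)
          (Multiset.le_cons_self _ _))
      refine Fin.addCases (fun i => ?_) (fun i => ?_) i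
      · rw [Fin.append_left]
        exact le_trans hfΓ (hf1 i)
      · rw [Fin.append_right]
        exact le_trans hfΓM (hf2 i)


/-- **Reduction to bipartite graphs via Plücker relations.** Let `n = 2m`, let
`A ⊔ Aᶜ` be a partition of the vertices with `|A| = m`, and let `Γ` have multidegree
`(d,…,d)`.  Then `X_Γ = Σ_i ε_i X_{Γ_i}` with `ε_i ∈ {±1}` and each `Γ_i` of multidegree
`(d,…,d)` all of whose edges join `A` to `Aᶜ`; moreover every edge of `Γ` joining `A` to
`Aᶜ` occurs (with its multiplicity) in every `Γ_i`. -/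
theorem reduction_to_bipartite (m d : ℕ) (A : Finset (Fin (2 * m))) (hA : A.card = m)
    (Γ : DGraph (2 * m)) (hΓl : Γ.loopless) (hΓdeg : ∀ v, Γ.mdeg v = d) :
    ∃ (r : ℕ) (Γs : Fin r → DGraph (2 * m)) (ε : Fin r → ℤ),
      (∀ i, (Γs i).loopless ∧ (∀ v, (Γs i).mdeg v = d) ∧
        ∀ e ∈ Γs i, (e.1 ∈ A ∧ e.2 ∉ A) ∨ (e.2 ∈ A ∧ e.1 ∉ A)) ∧
      (∀ i, ε i = 1 ∨ ε i = -1) ∧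
      XG Γ = ∑ i, ε i • XG (Γs i) ∧
      ∀ i, Γ.filter (fun e => (e.1 ∈ A ∧ e.2 ∉ A) ∨ (e.2 ∈ A ∧ e.1 ∉ A)) ≤ Γs i := by
  exact aux m d A hA (Multiset.countP (fun e => e.1 ∈ A ∧ e.2 ∈ A) Γ) Γ rfl hΓl hΓdeg
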